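/- Let T : C(X) → C(Y) be a bijective map with T(0) = 0 satisfying (1/M)‖f−g‖ − L ≤ ‖Tf − Tg‖ ≤ M‖f−g‖ + L for all f, g, where 1 ≤ M < √2, and suppose T⁻¹ satisfies the same inequalities. Fix D with 0 < D < 2/M − M. Then there exists m₀ ≥ 0 (depending only on M, L, D; with m₀ = 0 when L = 0) such that for all m > m₀ and all x ∈ X there exist a net (f_σ) of functions in C(X) with ‖f_σ‖ = |f_σ(x)| = m and f_σ → 0 uniformly on the complement of every open neighborhood of x, and points y_σ ∈ Y converging to some y ∈ Y, such that Tf_σ(y_σ) ≥ Dm and T(−f_σ)(y_σ) ≤ −Dm for all σ. -/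

import Mathlib

open Filter Topology

/-- A bundled nonempty directed index set (for Moore–Smith nets). -/
structure DirIndex : Type 1 where
  ι : Type
  [pre : Preorder ι]
  [dir : IsDirected ι (· ≤ ·)]
  [ne : Nonempty ι]

attribute [instance] DirIndex.pre DirIndex.dir DirIndex.ne

section Aux
open Set

lemma bump_exists {X : Type} [TopologicalSpace X] [CompactSpace X] [T2Space X]
    (x : X) (U : Set X) (hU : IsOpen U) (hx : x ∈ U) (m : ℝ) (hm : 0 < m) :
    ∃ f : C(X, ℝ), ‖f‖ = m ∧ f x = m ∧ Set.EqOn f 0 Uᶜ := by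
  obtain ⟨g, hg0, hg1, hgmem⟩ := exists_continuous_zero_one_of_isClosed
    hU.isClosed_compl isClosed_singleton
    (Set.disjoint_singleton_right.mpr (by simpa using hx))
  refine ⟨m • g, ?_, ?_, ?_⟩
  · have hgx : g x = 1 := hg1 rfl
    have h1 : ‖m • g‖ ≤ m := by
      rw [ContinuousMap.norm_le _ hm.le]
      intro z
      have := hgmem z
      simp only [ContinuousMap.smul_apply, smul_eq_mul, Real.norm_eq_abs]
      rw [abs_of_nonneg (by nlinarith [this.1])]
      nlinarith [this.2]
    have h2 : m ≤ ‖m • g‖ := by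
      have := (m • g).norm_coe_le_norm x
      simp only [ContinuousMap.smul_apply, smul_eq_mul, hgx, mul_one, Real.norm_eq_abs,
        abs_of_pos hm] at this
      exact this
    linarith
  · simp [hg1 rfl]
  · intro z hz
    simp [hg0 hz]

lemma point_exists {X Y : Type} [TopologicalSpace X] [CompactSpace X]
    [TopologicalSpace Y] [CompactSpace Y]
    (M L D m : ℝ) (hM0 : 0 < M) (hL : 0 ≤ L) (hD0 : 0 < D) (hm : 0 < m)
    (hc : 2 * L * M < (2 - M * M - D * M) * m)
    (T : C(X, ℝ) → C(Y, ℝ)) (h0 : T 0 = 0)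
    (hTlow : ∀ f g : C(X, ℝ), (1 / M) * ‖f - g‖ - L ≤ ‖T f - T g‖)
    (hTup : ∀ f g : C(X, ℝ), ‖T f - T g‖ ≤ M * ‖f - g‖ + L)
    (f : C(X, ℝ)) (hf : ‖f‖ = m) :
    ∃ y : Y, (D * m ≤ T f y ∧ T (-f) y ≤ -(D * m)) ∨
             (D * m ≤ T (-f) y ∧ T f y ≤ -(D * m)) := by
  set g := T f with hg
  set h := T (-f) with hh
  have hMinv : M * (1 / M) = 1 := mul_one_div_cancel hM0.ne'
  have hsub : ‖f - -f‖ = 2 * m := by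
    rw [sub_neg_eq_add, ← two_smul ℝ f, norm_smul, hf]
    norm_num
  have hgh : (1 / M) * (2 * m) - L ≤ ‖g - h‖ := by
    have := hTlow f (-f); rwa [hsub] at this
  have hgn : ‖g‖ ≤ M * m + L := by
    have := hTup f 0; rwa [h0, sub_zero, sub_zero, hf] at this
  have hhn : ‖h‖ ≤ M * m + L := by
    have := hTup (-f) 0
    rwa [h0, sub_zero, sub_zero, norm_neg, hf] at this
  have h2m : L * M < 2 * m := by
    nlinarith [mul_nonneg (mul_nonneg hD0.le hM0.le) hm.le,
      mul_nonneg (mul_nonneg hM0.le hM0.le) hm.le, mul_nonneg hL hM0.le]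
  have hK2 : D * m + M * m + 2 * L ≤ (1 / M) * (2 * m) := by
    have e : 2 * m / M = (1 / M) * (2 * m) := by ring
    rw [← e]
    exact (le_div_iff₀ hM0).mpr (by nlinarith)
  have hKpos : 0 < (1 / M) * (2 * m) - L := by
    have : L < 2 * m / M := (lt_div_iff₀ hM0).mpr h2m
    have e : 2 * m / M = (1 / M) * (2 * m) := by ring
    linarith [e ▸ this]
  have hghpos : 0 < ‖g - h‖ := lt_of_lt_of_le hKpos hgh
  cases isEmpty_or_nonempty Y with
  | inl hY =>
      exfalso
      have : g = h := ContinuousMap.ext fun y => isEmptyElim y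
      rw [this, sub_self, norm_zero] at hghpos
      exact lt_irrefl _ hghpos
  | inr hY =>
      obtain ⟨y, -, hy⟩ := isCompact_univ.exists_isMaxOn Set.univ_nonempty
        (Continuous.continuousOn ((g.continuous.sub h.continuous).abs : Continuous fun z => |g z - h z|))
      have hyK : (1 / M) * (2 * m) - L ≤ |g y - h y| := by
        refine le_trans hgh ?_
        rw [ContinuousMap.norm_le _ (abs_nonneg _)]
        intro z
        simpa [Real.norm_eq_abs] using hy (Set.mem_univ z)
      have hgy : |g y| ≤ M * m + L :=
        le_trans (by simpa [Real.norm_eq_abs] using g.norm_coe_le_norm y) hgn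
      have hhy : |h y| ≤ M * m + L :=
        le_trans (by simpa [Real.norm_eq_abs] using h.norm_coe_le_norm y) hhn
      rw [abs_le] at hgy hhy
      rcases le_abs.mp hyK with hcase | hcase
      · exact ⟨y, Or.inl ⟨by linarith [hhy.1], by linarith [hgy.2]⟩⟩
      · exact ⟨y, Or.inr ⟨by linarith [hgy.1], by linarith [hhy.2]⟩⟩

/-- Index of open neighborhoods of `x`, ordered by reverse inclusion. -/
def NbhdIdx (X : Type) [TopologicalSpace X] (x : X) : Type :=
  {U : Set X // IsOpen U ∧ x ∈ U}

instance {X : Type} [TopologicalSpace X] (x : X) : Preorder (NbhdIdx X x) where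
  le U V := V.1 ⊆ U.1
  le_refl U := subset_rfl
  le_trans U V W h1 h2 := Set.Subset.trans h2 h1

instance {X : Type} [TopologicalSpace X] (x : X) :
    IsDirected (NbhdIdx X x) (· ≤ ·) :=
  ⟨fun U V => ⟨⟨U.1 ∩ V.1, ⟨U.2.1.inter V.2.1, U.2.2, V.2.2⟩⟩,
    (Set.inter_subset_left : U.1 ∩ V.1 ⊆ U.1),
    (Set.inter_subset_right : U.1 ∩ V.1 ⊆ V.1)⟩⟩

instance {X : Type} [TopologicalSpace X] (x : X) : Nonempty (NbhdIdx X x) :=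
  ⟨⟨Set.univ, isOpen_univ, Set.mem_univ x⟩⟩

/-- Subnet index: an index together with a neighborhood of `y₀` containing the corresponding
net value. -/
structure SubIdx {ι : Type} [Preorder ι] {Y : Type} [TopologicalSpace Y]
    (yσ : ι → Y) (y₀ : Y) : Type where
  σ : ι
  N : Set Y
  hN : N ∈ 𝓝 y₀
  hmem : yσ σ ∈ N

instance subIdxPre {ι : Type} [Preorder ι] {Y : Type} [TopologicalSpace Y]
    (yσ : ι → Y) (y₀ : Y) : Preorder (SubIdx yσ y₀) where
  le p q := p.σ ≤ q.σ ∧ q.N ⊆ p.N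
  le_refl p := ⟨le_refl _, subset_rfl⟩
  le_trans p q r h1 h2 := ⟨h1.1.trans h2.1, h2.2.trans h1.2⟩

lemma subIdx_nonempty {ι : Type} [Preorder ι] [Nonempty ι] {Y : Type} [TopologicalSpace Y]
    (yσ : ι → Y) (y₀ : Y) : Nonempty (SubIdx yσ y₀) :=
  ⟨⟨Classical.arbitrary ι, Set.univ, univ_mem, Set.mem_univ _⟩⟩

lemma subIdx_directed {ι : Type} [Preorder ι] [IsDirected ι (· ≤ ·)] [Nonempty ι]
    {Y : Type} [TopologicalSpace Y] {yσ : ι → Y} {y₀ : Y}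
    (h : MapClusterPt y₀ atTop yσ) : IsDirected (SubIdx yσ y₀) (· ≤ ·) := by
  constructor
  intro p q
  have hN : p.N ∩ q.N ∈ 𝓝 y₀ := inter_mem p.hN q.hN
  obtain ⟨σ', hσ'p, hσ'q⟩ := directed_of (· ≤ ·) p.σ q.σ
  obtain ⟨σ'', h1, h2⟩ :=
    ((mapClusterPt_iff_frequently.mp h _ hN).and_eventually (eventually_ge_atTop σ')).exists
  exact ⟨⟨σ'', p.N ∩ q.N, hN, h1⟩,
    ⟨hσ'p.trans h2, Set.inter_subset_left⟩, ⟨hσ'q.trans h2, Set.inter_subset_right⟩⟩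

end Aux

/-- `f` is an `m`-peak net at `x`: `‖f σ‖ = |f σ x| = m` for all `σ`, and `f σ → 0`
uniformly on the complement of every open neighborhood of `x`. -/
def IsPeakNet {X : Type} [TopologicalSpace X] [CompactSpace X] (I : DirIndex)
    (f : I.ι → C(X, ℝ)) (m : ℝ) (x : X) : Prop :=
  (∀ σ, ‖f σ‖ = m ∧ |f σ x| = m) ∧
  ∀ U : Set X, IsOpen U → x ∈ U →
    TendstoUniformlyOn (fun σ => ⇑(f σ)) 0 atTop Uᶜ

/-- The set `S^D_m(x) ⊆ Y`: limits `y` of nets `y_σ` such that some `m`-peak net `f_σ` at `x`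
satisfies `T f_σ (y_σ) ≥ D m` and `T (-f_σ) (y_σ) ≤ -D m`. -/
def SD {X Y : Type} [TopologicalSpace X] [CompactSpace X] [TopologicalSpace Y]
    (T : C(X, ℝ) → C(Y, ℝ)) (D m : ℝ) (x : X) : Set Y :=
  { y | ∃ (I : DirIndex) (f : I.ι → C(X, ℝ)) (yσ : I.ι → Y),
      IsPeakNet I f m x ∧ Tendsto yσ atTop (𝓝 y) ∧
      ∀ σ, D * m ≤ T (f σ) (yσ σ) ∧ T (-(f σ)) (yσ σ) ≤ -(D * m) }

/-- Non-emptiness of `S^D_m(x)` for `m` large. -/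
theorem stmt_6 {X Y : Type} [TopologicalSpace X] [CompactSpace X] [T2Space X]
    [TopologicalSpace Y] [CompactSpace Y] [T2Space Y]
    (M L D : ℝ) (hM1 : 1 ≤ M) (hM2 : M < Real.sqrt 2) (hL : 0 ≤ L)
    (hD0 : 0 < D) (hD : D < 2 / M - M)
    (T : C(X, ℝ) → C(Y, ℝ)) (T' : C(Y, ℝ) → C(X, ℝ))
    (hbij : Function.Bijective T) (h0 : T 0 = 0)
    (hinv₁ : Function.LeftInverse T' T) (hinv₂ : Function.RightInverse T' T)
    (hTlow : ∀ f g : C(X, ℝ), (1 / M) * ‖f - g‖ - L ≤ ‖T f - T g‖)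
    (hTup : ∀ f g : C(X, ℝ), ‖T f - T g‖ ≤ M * ‖f - g‖ + L)
    (hT'low : ∀ f g : C(Y, ℝ), (1 / M) * ‖f - g‖ - L ≤ ‖T' f - T' g‖)
    (hT'up : ∀ f g : C(Y, ℝ), ‖T' f - T' g‖ ≤ M * ‖f - g‖ + L) :
    ∃ m₀ : ℝ, 0 ≤ m₀ ∧ (L = 0 → m₀ = 0) ∧
      ∀ m : ℝ, m₀ < m → ∀ x : X, (SD T D m x).Nonempty := by
  have hM0 : 0 < M := lt_of_lt_of_le one_pos hM1
  have hd : 0 < 2 - M * M - D * M := by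
    have h' : D + M < 2 / M := by linarith
    have h2 : (D + M) * M < 2 := by
      have := (mul_lt_mul_of_pos_right h' hM0)
      rwa [div_mul_cancel₀ 2 hM0.ne'] at this
    nlinarith
  refine ⟨2 * L * M / (2 - M * M - D * M), div_nonneg (by positivity) hd.le,
    fun hL0 => by rw [hL0]; ring_nf, ?_⟩
  intro m hm x
  have hm0 : 0 < m := lt_of_le_of_lt (div_nonneg (by positivity) hd.le) hm
  have hc : 2 * L * M < (2 - M * M - D * M) * m := by
    have := (div_lt_iff₀ hd).mp hm
    linarith [this]
  -- For each neighborhood index, choose a (possibly sign-flipped) bump and a witness point.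
  have key : ∀ σ : NbhdIdx X x, ∃ (f : C(X, ℝ)) (y : Y),
      ‖f‖ = m ∧ |f x| = m ∧ Set.EqOn f 0 σ.1ᶜ ∧
      D * m ≤ T f y ∧ T (-f) y ≤ -(D * m) := by
    intro σ
    obtain ⟨f, hfn, hfx, hf0⟩ := bump_exists x σ.1 σ.2.1 σ.2.2 m hm0
    obtain ⟨y, hcase⟩ := point_exists M L D m hM0 hL hD0 hm0 hc T h0 hTlow hTup f hfn
    rcases hcase with ⟨h1, h2⟩ | ⟨h1, h2⟩
    · exact ⟨f, y, hfn, by rw [hfx, abs_of_pos hm0], hf0, h1, h2⟩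
    · refine ⟨-f, y, by rw [norm_neg, hfn], ?_, ?_, h1, ?_⟩
      · simp [hfx, abs_of_pos hm0]
      · intro z hz; simp [hf0 hz]
      · rwa [neg_neg]
  choose F yn hFn hFx hF0 hge hle using key
  -- Cluster point of the net of witness points.
  obtain ⟨y₀, hclus⟩ := exists_clusterPt_of_compactSpace (map yn atTop)
  have hclus' : MapClusterPt y₀ atTop yn := hclus
  letI : IsDirected (SubIdx yn y₀) (· ≤ ·) := subIdx_directed hclus'
  letI : Nonempty (SubIdx yn y₀) := subIdx_nonempty yn y₀
  refine ⟨y₀, DirIndex.mk (SubIdx yn y₀), fun j => F j.σ, fun j => yn j.σ,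
    ⟨fun j => ⟨hFn _, hFx _⟩, ?_⟩, ?_, fun j => ⟨hge _, hle _⟩⟩
  · -- uniform convergence off neighborhoods
    intro U hU hxU
    rw [Metric.tendstoUniformlyOn_iff]
    intro ε hε
    have hj₀ : (Set.univ : Set Y) ∈ 𝓝 y₀ := univ_mem
    filter_upwards [eventually_ge_atTop
      (⟨⟨U, hU, hxU⟩, Set.univ, hj₀, Set.mem_univ _⟩ : SubIdx yn y₀)] with j hj
    intro z hz
    have hsub : (j.σ : NbhdIdx X x).1 ⊆ U := hj.1
    have hz' : z ∈ (j.σ : NbhdIdx X x).1ᶜ := fun hzin => hz (hsub hzin)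
    have : F j.σ z = 0 := hF0 j.σ hz'
    simpa [this] using hε
  · -- convergence of the point net to y₀
    rw [Filter.tendsto_def]
    intro s hs
    obtain ⟨σ₁, hσ₁⟩ := (mapClusterPt_iff_frequently.mp hclus' s hs).exists
    have : ∀ᶠ j : SubIdx yn y₀ in atTop, yn j.σ ∈ s := by
      filter_upwards [eventually_ge_atTop
        ((⟨σ₁, s, hs, hσ₁⟩ : SubIdx yn y₀))] with j hj
      exact hj.2 j.hmem
    exact this
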